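/- (Slutsky, multiplicative part) Let (Ω, F, P) be a probability space, let X_m, Y_m, X : Ω → ℝ be measurable with each X_m and X having well-defined laws, let c ∈ ℝ, and suppose: (i) X_m converges in distribution to X, i.e., for every bounded continuous f : ℝ → ℝ, E[f(X_m)] → E[f(X)]; and (ii) Y_m converges in probability to c, i.e., for every ε > 0, P(|Y_m − c| ≥ ε) → 0. Then X_m · Y_m converges in distribution to c · X: for every bounded continuous f : ℝ → ℝ, E[f(X_m · Y_m)] → E[f(c · X)]. -/

import Mathlib

open MeasureTheory Filter

private lemma slutsky_int_aux {Ω : Type*} [MeasurableSpace Ω]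
    (P : Measure Ω) [IsProbabilityMeasure P] {f : ℝ → ℝ} {Z : Ω → ℝ}
    (hf : Continuous f) (hZ : Measurable Z) {C : ℝ} (hC : ∀ t, |f t| ≤ C) :
    Integrable (fun ω => f (Z ω)) P := by
  refine Integrable.mono' (integrable_const C)
    ((hf.measurable.comp hZ).aestronglyMeasurable) ?_
  filter_upwards with ω
  simpa [Real.norm_eq_abs] using hC (Z ω)

private lemma slutsky_tight {Ω : Type*} [MeasurableSpace Ω]
    (P : Measure Ω) [IsProbabilityMeasure P]
    (X : ℕ → Ω → ℝ) (X₀ : Ω → ℝ)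
    (hX : ∀ m, Measurable (X m)) (hX₀ : Measurable X₀)
    (hconv : ∀ f : ℝ → ℝ, Continuous f → (∃ C, ∀ t, |f t| ≤ C) →
        Tendsto (fun m => ∫ ω, f (X m ω) ∂P) atTop (nhds (∫ ω, f (X₀ ω) ∂P))) :
    ∀ ε > (0 : ℝ), ∃ K : ℝ, 1 ≤ K ∧
      ∀ᶠ m in atTop, (P {ω | K ≤ |X m ω|}).toReal < ε := by
  intro ε hε
  -- sets s n = {|X₀| ≥ n}
  set s : ℕ → Set Ω := fun n => {ω | (n : ℝ) ≤ |X₀ ω|} with hs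
  have hsm : ∀ n, MeasurableSet (s n) := fun n =>
    measurableSet_le measurable_const hX₀.abs
  have hanti : Antitone s := by
    intro a b hab ω hω
    have hab' : (a : ℝ) ≤ b := Nat.cast_le.mpr hab
    exact le_trans hab' hω
  have hiempty : ⋂ n, s n = ∅ := by
    ext ω
    simp only [Set.mem_iInter, Set.mem_empty_iff_false, iff_false, not_forall]
    obtain ⟨n, hn⟩ := exists_nat_gt (|X₀ ω|)
    exact ⟨n, by simpa [hs] using not_le.mpr hn⟩
  have htend : Tendsto (fun n => P (s n)) atTop (nhds 0) := by
    have := MeasureTheory.tendsto_measure_iInter_atTop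
      (μ := P) (s := s) (fun n => (hsm n).nullMeasurableSet) hanti
      ⟨0, measure_ne_top _ _⟩
    simpa [hiempty, Function.comp_def] using this
  have hpos : (0 : ENNReal) < ENNReal.ofReal (ε / 2) := by
    exact ENNReal.ofReal_pos.mpr (by linarith)
  obtain ⟨n, hn⟩ := (htend.eventually_lt_const hpos).exists
  refine ⟨(n : ℝ) + 1, le_add_of_nonneg_left (Nat.cast_nonneg n), ?_⟩
  -- continuous approximation g
  set g : ℝ → ℝ := fun t => min 1 (max 0 (|t| - n)) with hg
  have hgc : Continuous g := by
    apply Continuous.min continuous_const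
    exact Continuous.max continuous_const (continuous_abs.sub continuous_const)
  have hgb : ∀ t, |g t| ≤ 1 := by
    intro t
    rw [abs_le]
    constructor
    · exact le_trans (by norm_num) (le_min zero_le_one (le_max_left _ _))
    · exact min_le_left _ _
  have hg0 : ∀ t, 0 ≤ g t := fun t => le_min zero_le_one (le_max_left _ _)
  have hg1 : ∀ t, g t ≤ 1 := fun t => min_le_left _ _
  -- ∫ g(X₀) ≤ (P (s n)).toReal
  have hIg0 : ∫ ω, g (X₀ ω) ∂P ≤ (P (s n)).toReal := by
    have h1 : ∫ ω, g (X₀ ω) ∂P ≤ ∫ ω, (s n).indicator (fun _ => (1:ℝ)) ω ∂P := by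
      apply integral_mono (slutsky_int_aux P hgc hX₀ hgb)
        ((integrable_const (1:ℝ)).indicator (hsm n))
      intro ω
      by_cases hω : ω ∈ s n
      · simpa [Set.indicator_of_mem hω] using hg1 (X₀ ω)
      · rw [Set.indicator_of_notMem hω]
        have : |X₀ ω| - n < 0 := by
          simp only [hs, Set.mem_setOf_eq, not_le] at hω
          linarith
        simp [hg, max_eq_left this.le]
    rwa [integral_indicator_const (1:ℝ) (hsm n), measureReal_def, smul_eq_mul, mul_one] at h1
  have hlim : ∫ ω, g (X₀ ω) ∂P < ε / 2 := by
    have : (P (s n)).toReal < ε / 2 := ENNReal.toReal_lt_of_lt_ofReal hn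
    linarith
  have hevent : ∀ᶠ m in atTop, ∫ ω, g (X m ω) ∂P < ε / 2 :=
    (hconv g hgc ⟨1, hgb⟩).eventually_lt_const hlim
  filter_upwards [hevent] with m hm
  -- (P {K ≤ |X m|}).toReal ≤ ∫ g(X m)
  set A : Set Ω := {ω | (n : ℝ) + 1 ≤ |X m ω|} with hA
  have hAm : MeasurableSet A := measurableSet_le measurable_const (hX m).abs
  have h2 : ∫ ω, A.indicator (fun _ => (1:ℝ)) ω ∂P ≤ ∫ ω, g (X m ω) ∂P := by
    apply integral_mono ((integrable_const (1:ℝ)).indicator hAm)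
      (slutsky_int_aux P hgc (hX m) hgb)
    intro ω
    by_cases hω : ω ∈ A
    · rw [Set.indicator_of_mem hω]
      have h1le : (1 : ℝ) ≤ |X m ω| - n := by
        have := hω
        simp only [hA, Set.mem_setOf_eq] at this
        linarith
      have : g (X m ω) = 1 := by
        simp only [hg]
        rw [max_eq_right (le_trans zero_le_one h1le), min_eq_left h1le]
      linarith
    · rw [Set.indicator_of_notMem hω]
      exact hg0 _
  rw [integral_indicator_const (1:ℝ) hAm, measureReal_def, smul_eq_mul, mul_one] at h2
  calc (P A).toReal ≤ ∫ ω, g (X m ω) ∂P := h2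
    _ < ε / 2 := hm
    _ < ε := by linarith

theorem slutsky_mul {Ω : Type*} [MeasurableSpace Ω]
    (P : Measure Ω) [IsProbabilityMeasure P]
    (X : ℕ → Ω → ℝ) (Y : ℕ → Ω → ℝ) (X₀ : Ω → ℝ) (c : ℝ)
    (hX : ∀ m, Measurable (X m)) (hY : ∀ m, Measurable (Y m))
    (hX₀ : Measurable X₀)
    (hconv : ∀ f : ℝ → ℝ, Continuous f → (∃ C, ∀ t, |f t| ≤ C) →
        Tendsto (fun m => ∫ ω, f (X m ω) ∂P) atTop (nhds (∫ ω, f (X₀ ω) ∂P)))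
    (hprob : ∀ ε > (0 : ℝ),
        Tendsto (fun m => P {ω | ε ≤ |Y m ω - c|}) atTop (nhds 0)) :
    ∀ f : ℝ → ℝ, Continuous f → (∃ C, ∀ t, |f t| ≤ C) →
      Tendsto (fun m => ∫ ω, f (X m ω * Y m ω) ∂P) atTop
        (nhds (∫ ω, f (c * X₀ ω) ∂P)) := by
  intro f hf ⟨C, hC⟩
  set C₀ : ℝ := max C 1 with hC₀def
  have hC₀pos : (0 : ℝ) < C₀ := lt_of_lt_of_le one_pos (le_max_right _ _)
  have hC₀ : ∀ t, |f t| ≤ C₀ := fun t => (hC t).trans (le_max_left _ _)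
  -- second part: ∫ f(c X m) → ∫ f(c X₀)
  have hsecond : Tendsto (fun m => ∫ ω, f (c * X m ω) ∂P) atTop
      (nhds (∫ ω, f (c * X₀ ω) ∂P)) := by
    exact hconv (fun t => f (c * t)) (hf.comp (continuous_const.mul continuous_id))
      ⟨C₀, fun t => hC₀ _⟩
  -- first part: difference tends to 0
  have hdiff : Tendsto
      (fun m => (∫ ω, f (X m ω * Y m ω) ∂P) - ∫ ω, f (c * X m ω) ∂P)
      atTop (nhds 0) := by
    rw [NormedAddCommGroup.tendsto_nhds_zero]
    intro ε hε
    -- tightness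
    obtain ⟨K, hK1, hKev⟩ := slutsky_tight P X X₀ hX hX₀ hconv (ε / (8 * C₀))
      (by positivity)
    have hKpos : (0 : ℝ) < K := lt_of_lt_of_le one_pos hK1
    -- uniform continuity on [-M, M]
    set M : ℝ := K * (|c| + 1) with hM
    have hMpos : 0 < M := by positivity
    have hUC := (isCompact_Icc (a := -M) (b := M)).uniformContinuousOn_of_continuous
      hf.continuousOn
    obtain ⟨δ₀, hδ₀pos, hδ₀⟩ := Metric.uniformContinuousOn_iff.mp hUC (ε / 2)
      (by linarith)
    set δ : ℝ := min 1 (δ₀ / (K + 1)) with hδdef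
    have hδpos : 0 < δ := lt_min one_pos (by positivity)
    have hδ1 : δ ≤ 1 := min_le_left _ _
    have hKδ : K * δ < δ₀ := by
      have h1 : δ ≤ δ₀ / (K + 1) := min_le_right _ _
      have h2 : K * δ ≤ K * (δ₀ / (K + 1)) := by nlinarith
      have h3 : K * (δ₀ / (K + 1)) < δ₀ := by
        rw [mul_div_assoc']
        rw [div_lt_iff₀ (by linarith)]
        nlinarith
      linarith
    -- eventual smallness of the Y probability
    have hYev : ∀ᶠ m in atTop,
        (P {ω | δ ≤ |Y m ω - c|}).toReal < ε / (8 * C₀) := by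
      have h := (hprob δ hδpos).eventually_lt_const
        (show (0:ENNReal) < ENNReal.ofReal (ε / (8 * C₀)) by
          exact ENNReal.ofReal_pos.mpr (by positivity))
      filter_upwards [h] with m hm
      exact ENNReal.toReal_lt_of_lt_ofReal hm
    filter_upwards [hKev, hYev] with m hmK hmY
    -- integrability
    have hint1 : Integrable (fun ω => f (X m ω * Y m ω)) P :=
      slutsky_int_aux P hf ((hX m).mul (hY m)) hC₀
    have hint2 : Integrable (fun ω => f (c * X m ω)) P :=
      slutsky_int_aux P hf (measurable_const.mul (hX m)) hC₀
    -- bad sets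
    set A1 : Set Ω := {ω | K ≤ |X m ω|} with hA1
    set A2 : Set Ω := {ω | δ ≤ |Y m ω - c|} with hA2
    have hA1m : MeasurableSet A1 := measurableSet_le measurable_const (hX m).abs
    have hA2m : MeasurableSet A2 :=
      measurableSet_le measurable_const ((hY m).sub measurable_const).abs
    set B : Set Ω := A1 ∪ A2 with hB
    have hBm : MeasurableSet B := hA1m.union hA2m
    -- pointwise bound
    have hpt : ∀ ω, ‖f (X m ω * Y m ω) - f (c * X m ω)‖ ≤
        ε / 2 + B.indicator (fun _ => 2 * C₀) ω := by
      intro ω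
      by_cases hω : ω ∈ B
      · rw [Set.indicator_of_mem hω]
        have h1 := hC₀ (X m ω * Y m ω)
        have h2 := hC₀ (c * X m ω)
        have : ‖f (X m ω * Y m ω) - f (c * X m ω)‖ ≤ 2 * C₀ := by
          rw [Real.norm_eq_abs]
          calc |f (X m ω * Y m ω) - f (c * X m ω)|
              ≤ |f (X m ω * Y m ω)| + |f (c * X m ω)| := abs_sub _ _
            _ ≤ 2 * C₀ := by linarith
        linarith
      · rw [Set.indicator_of_notMem hω, add_zero]
        simp only [hB, Set.mem_union, not_or] at hω
        obtain ⟨hω1, hω2⟩ := hω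
        have hXlt : |X m ω| < K := not_le.mp (by simpa [hA1] using hω1)
        have hYlt : |Y m ω - c| < δ := not_le.mp (by simpa [hA2] using hω2)
        have hXnn : 0 ≤ |X m ω| := abs_nonneg _
        -- membership in [-M, M]
        have hmem1 : X m ω * Y m ω ∈ Set.Icc (-M) M := by
          rw [Set.mem_Icc, ← abs_le]
          calc |X m ω * Y m ω| = |X m ω| * |Y m ω| := abs_mul _ _
            _ ≤ K * (|c| + 1) := by
                have hYb : |Y m ω| ≤ |c| + 1 := by
                  have := abs_sub_abs_le_abs_sub (Y m ω) c
                  linarith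
                have h1 : |X m ω| * |Y m ω| ≤ |X m ω| * (|c| + 1) :=
                  mul_le_mul_of_nonneg_left hYb hXnn
                have h2 : |X m ω| * (|c| + 1) ≤ K * (|c| + 1) :=
                  mul_le_mul_of_nonneg_right hXlt.le (by positivity)
                linarith
        have hmem2 : c * X m ω ∈ Set.Icc (-M) M := by
          rw [Set.mem_Icc, ← abs_le]
          calc |c * X m ω| = |c| * |X m ω| := abs_mul _ _
            _ ≤ K * (|c| + 1) := by nlinarith
        have hdist : dist (X m ω * Y m ω) (c * X m ω) < δ₀ := by
          rw [Real.dist_eq]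
          have : X m ω * Y m ω - c * X m ω = X m ω * (Y m ω - c) := by ring
          rw [this, abs_mul]
          calc |X m ω| * |Y m ω - c| ≤ K * δ := by nlinarith
            _ < δ₀ := hKδ
        have := hδ₀ _ hmem1 _ hmem2 hdist
        rw [Real.dist_eq] at this
        rw [Real.norm_eq_abs]
        linarith
    -- integrate
    have hintInd : Integrable (fun ω => ε / 2 + B.indicator (fun _ => 2 * C₀) ω) P :=
      (integrable_const _).add ((integrable_const _).indicator hBm)
    have hbound : ∫ ω, ‖f (X m ω * Y m ω) - f (c * X m ω)‖ ∂P ≤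
        ε / 2 + 2 * C₀ * (P B).toReal := by
      have h1 : ∫ ω, ‖f (X m ω * Y m ω) - f (c * X m ω)‖ ∂P ≤
          ∫ ω, (ε / 2 + B.indicator (fun _ => 2 * C₀) ω) ∂P := by
        apply integral_mono (hint1.sub hint2).norm hintInd hpt
      have h2 : ∫ ω, (ε / 2 + B.indicator (fun _ => 2 * C₀) ω) ∂P =
          ε / 2 + (P B).toReal * (2 * C₀) := by
        rw [integral_add (integrable_const _) ((integrable_const _).indicator hBm),
          integral_const, integral_indicator_const _ hBm]
        simp [measure_univ, measureReal_def]
      rw [h2] at h1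
      linarith
    -- measure of B
    have hPB : (P B).toReal < ε / (4 * C₀) := by
      have h1 : P B ≤ P A1 + P A2 := measure_union_le _ _
      have h2 : (P B).toReal ≤ (P A1).toReal + (P A2).toReal := by
        rw [← ENNReal.toReal_add (measure_ne_top _ _) (measure_ne_top _ _)]
        exact ENNReal.toReal_mono
          (ENNReal.add_ne_top.mpr ⟨measure_ne_top _ _, measure_ne_top _ _⟩) h1
      have : (P A1).toReal + (P A2).toReal < ε / (8 * C₀) + ε / (8 * C₀) := by
        exact add_lt_add hmK hmY
      have heq : ε / (8 * C₀) + ε / (8 * C₀) = ε / (4 * C₀) := by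
        field_simp; ring
      linarith
    have hnorm : ‖(∫ ω, f (X m ω * Y m ω) ∂P) - ∫ ω, f (c * X m ω) ∂P‖ ≤
        ∫ ω, ‖f (X m ω * Y m ω) - f (c * X m ω)‖ ∂P := by
      rw [← integral_sub hint1 hint2]
      exact norm_integral_le_integral_norm _
    have : 2 * C₀ * (P B).toReal < ε / 2 := by
      have := mul_lt_mul_of_pos_left hPB (show (0:ℝ) < 2 * C₀ by linarith)
      have heq : 2 * C₀ * (ε / (4 * C₀)) = ε / 2 := by field_simp; ring
      linarith [heq ▸ this]
    linarith
  have := hdiff.add hsecond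
  rw [zero_add] at this
  refine this.congr fun m => by ring
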